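/- arXiv:1807.11187 — 8 statements merged into one kernel-verified Lean document; each statement's English description precedes it below -/
import Mathlib

section
/- Let N, m be positive integers, let σ be a permutation of {1,...,N}, let P be the N×N permutation matrix with P_{jk} = 1 if j = σ(k) and 0 otherwise, and let c_1,...,c_m ∈ ℂ^N satisfy Σ_{n=1}^m |c_n(i)|² = 1 for every i. Set K_n := P · diag(c_n). Then Σ_{n=1}^m K_n† K_n = I, and for every N×N complex matrix ρ, the matrix ρ' := Σ_{n=1}^m K_n ρ K_n† satisfies ρ'_{σ(i),σ(j)} = A_{ij} · ρ_{ij} for all i, j, where A_{ij} := Σ_{n=1}^m c_n(i) · conj(c_n(j)); moreover A is positive semidefinite and A_{ii} = 1 for all i. -/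
open Matrix Finset
open scoped ComplexOrder

/-- structural form of a pGIO. -/
theorem pGIO_structure (N m : ℕ) (hN : 0 < N) (hm : 0 < m)
    (σ : Equiv.Perm (Fin N))
    (P : Matrix (Fin N) (Fin N) ℂ)
    (hP : ∀ j k, P j k = if j = σ k then 1 else 0)
    (c : Fin m → Fin N → ℂ)
    (hc : ∀ i, ∑ n, ‖c n i‖ ^ 2 = 1)
    (K : Fin m → Matrix (Fin N) (Fin N) ℂ)
    (hK : ∀ n, K n = P * Matrix.diagonal (c n))
    (A : Matrix (Fin N) (Fin N) ℂ)
    (hA : ∀ i j, A i j = ∑ n, c n i * (starRingEnd ℂ) (c n j)) :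
    (∑ n, (K n)ᴴ * K n = 1) ∧
    (∀ ρ : Matrix (Fin N) (Fin N) ℂ, ∀ i j,
      (∑ n, K n * ρ * (K n)ᴴ) (σ i) (σ j) = A i j * ρ i j) ∧
    A.PosSemidef ∧ (∀ i, A i i = 1) := by
  have hKe : ∀ n j k, K n j k = if j = σ k then c n k else 0 := by
    intro n j k
    rw [hK, Matrix.mul_diagonal, hP]
    split <;> simp
  have hcC : ∀ i, (∑ n, c n i * (starRingEnd ℂ) (c n i)) = 1 := by
    intro i
    have : ∀ n : Fin m, c n i * (starRingEnd ℂ) (c n i)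
        = ((‖c n i‖ ^ 2 : ℝ) : ℂ) := by
      intro n
      rw [Complex.mul_conj, Complex.sq_norm]
    rw [Finset.sum_congr rfl (fun n _ => this n), ← Complex.ofReal_sum, hc i,
      Complex.ofReal_one]
  have hAii : ∀ i, A i i = 1 := by
    intro i; rw [hA]; exact hcC i
  refine ⟨?_, ?_, ?_, hAii⟩
  · ext i j
    simp only [Matrix.sum_apply, Matrix.mul_apply, Matrix.conjTranspose_apply, hKe]
    by_cases h : i = j
    · subst h
      simp only [Matrix.one_apply_eq]
      rw [← hcC i]
      refine Finset.sum_congr rfl fun n _ => ?_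
      rw [Finset.sum_eq_single (σ i)]
      · simp [mul_comm]
      · intro b _ hb
        simp only [hb, if_false, zero_mul, ite_mul, mul_ite]
        simp [hb]
      · simp
    · rw [Matrix.one_apply_ne h]
      refine Finset.sum_eq_zero fun n _ => Finset.sum_eq_zero fun a _ => ?_
      by_cases hai : a = σ i
      · have haj : a ≠ σ j := by
          rintro rfl
          exact h (σ.injective hai.symm)
        simp only [hai, haj, if_true, if_false, mul_zero]
        simp
        exact fun h' => absurd h' h
      · simp [hai]
  · intro ρ i j
    simp only [Matrix.sum_apply, Matrix.mul_apply, Matrix.conjTranspose_apply, hKe, hA,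
      Finset.sum_mul]
    refine Finset.sum_congr rfl fun n _ => ?_
    rw [Finset.sum_eq_single j]
    · congr 1
      rw [Finset.sum_eq_single i]
      · simp only [EmbeddingLike.apply_eq_iff_eq, if_true, eq_self_iff_true, if_pos rfl,
          Complex.star_def]
        ring
      · intro a _ ha
        simp only [EmbeddingLike.apply_eq_iff_eq, ite_mul, zero_mul, mul_ite, mul_zero]
        rw [if_neg (fun h : i = a => ha h.symm)]
      · simp
    · intro b _ hb
      simp only [EmbeddingLike.apply_eq_iff_eq, ite_mul, zero_mul, mul_ite, mul_zero,
        Finset.sum_ite_eq, mul_eq_zero]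
      rw [if_pos (Finset.mem_univ i), if_neg (fun h : j = b => hb h.symm)]
      simp
    · simp
  · refine Matrix.posSemidef_iff_dotProduct_mulVec.mpr ⟨?_, ?_⟩
    · ext i j
      simp only [Matrix.conjTranspose_apply, hA, Complex.star_def, map_sum]
      refine Finset.sum_congr rfl fun n _ => ?_
      rw [_root_.map_mul, Complex.conj_conj, mul_comm]
    · intro x
      have calc1 : star x ⬝ᵥ A.mulVec x
          = ∑ i, ∑ j, ∑ n,
            (starRingEnd ℂ) (x i) * c n i * (x j * (starRingEnd ℂ) (c n j)) := by
        simp only [dotProduct, Matrix.mulVec, dotProduct, hA, Pi.star_apply,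
          Complex.star_def, Finset.mul_sum, Finset.sum_mul]
        refine Finset.sum_congr rfl fun i _ => Finset.sum_congr rfl fun j _ =>
          Finset.sum_congr rfl fun n _ => by ring
      rw [calc1]
      rw [show (∑ i, ∑ j, ∑ n,
            (starRingEnd ℂ) (x i) * c n i * (x j * (starRingEnd ℂ) (c n j)))
          = ∑ i, ∑ n, ∑ j,
            (starRingEnd ℂ) (x i) * c n i * (x j * (starRingEnd ℂ) (c n j)) from
        Finset.sum_congr rfl fun i _ => Finset.sum_comm, Finset.sum_comm]
      refine Finset.sum_nonneg fun n _ => ?_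
      have h2 : (∑ i, ∑ j,
            (starRingEnd ℂ) (x i) * c n i * (x j * (starRingEnd ℂ) (c n j)))
          = (∑ i, (starRingEnd ℂ) (x i) * c n i)
            * star (∑ i, (starRingEnd ℂ) (x i) * c n i) := by
        rw [show star (∑ k, (starRingEnd ℂ) (x k) * c n k)
            = ∑ j, x j * (starRingEnd ℂ) (c n j) by
          simp [Complex.star_def, map_sum, mul_comm], Finset.sum_mul_sum]
      rw [h2]
      exact mul_star_self_nonneg _
end

section
/- Let ρ and A be N×N complex matrices with |A_{ij}| ≤ 1 for all i, j, let σ be a permutation of {1,...,N}, and let ρ' be the matrix with entries ρ'_{ij} := A_{σ(i),σ(j)} · ρ_{σ(i),σ(j)}. Then perm(|ρ'|) ≤ perm(|ρ|), where |M| denotes the entrywise absolute value of M. -/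
open Matrix Finset

/-- The permanent of the entrywise absolute value of a complex matrix. -/
noncomputable def permAbs {N : ℕ} (M : Matrix (Fin N) (Fin N) ℂ) : ℝ :=
  ∑ τ : Equiv.Perm (Fin N), ∏ i, ‖M i (τ i)‖

/-- perm(|ρ|) does not increase under a pGIO image. -/
theorem pGIO_permAbs_mono (N : ℕ)
    (ρ A : Matrix (Fin N) (Fin N) ℂ)
    (hA : ∀ i j, ‖A i j‖ ≤ 1)
    (σ : Equiv.Perm (Fin N))
    (ρ' : Matrix (Fin N) (Fin N) ℂ)
    (hρ' : ∀ i j, ρ' i j = A (σ i) (σ j) * ρ (σ i) (σ j)) :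
    permAbs ρ' ≤ permAbs ρ := by
  unfold permAbs
  calc ∑ τ : Equiv.Perm (Fin N), ∏ i, ‖ρ' i (τ i)‖
      ≤ ∑ τ : Equiv.Perm (Fin N), ∏ i, ‖ρ (σ i) (σ (τ i))‖ := by
        refine Finset.sum_le_sum fun τ _ => ?_
        refine Finset.prod_le_prod (fun i _ => norm_nonneg _) fun i _ => ?_
        rw [hρ', norm_mul]
        calc ‖A (σ i) (σ (τ i))‖ * ‖ρ (σ i) (σ (τ i))‖
            ≤ 1 * ‖ρ (σ i) (σ (τ i))‖ :=
              mul_le_mul_of_nonneg_right (hA _ _) (norm_nonneg _)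
          _ = _ := one_mul _
    _ = ∑ τ : Equiv.Perm (Fin N), ∏ i, ‖ρ i (τ i)‖ := by
        refine Fintype.sum_equiv ((Equiv.mulLeft σ).trans (Equiv.mulRight σ⁻¹))
          _ _ fun τ => ?_
        have := Equiv.prod_comp σ
          (fun i => ‖ρ i ((σ * τ * σ⁻¹) i)‖)
        show _ = ∏ i, ‖ρ i ((σ * τ * σ⁻¹) i)‖
        rw [← this]
        simp [Equiv.Perm.mul_apply]
end

section
/- Fix integers N ≥ 1 and a with 0 ≤ a ≤ N and a ≠ 1, and for an N×N complex matrix ρ define J_a(ρ) as the maximum over all permutations σ of {1,...,N} having exactly N − a fixed points of the quantity ∏_{i=1}^N |ρ_{i,σ(i)}|. Let A be an N×N complex matrix with |A_{ij}| ≤ 1 for all i, j, let π be a permutation of {1,...,N}, and let ρ' be the matrix with entries ρ'_{ij} := A_{π(i),π(j)} · ρ_{π(i),π(j)}. Then J_a(ρ') ≤ J_a(ρ). -/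
open Matrix Finset

/-- `J N a ρ` : the supremum (in fact maximum) over all permutations `σ` of `Fin N`
with exactly `N - a` fixed points of `∏ i, |ρ i (σ i)|`. -/
noncomputable def J (N a : ℕ) (ρ : Matrix (Fin N) (Fin N) ℂ) : ℝ :=
  sSup {x : ℝ | ∃ σ : Equiv.Perm (Fin N),
    (Finset.univ.filter fun i => σ i = i).card = N - a ∧
    x = ∏ i, ‖ρ i (σ i)‖}

lemma J_bddAbove (N a : ℕ) (ρ : Matrix (Fin N) (Fin N) ℂ) :
    BddAbove {x : ℝ | ∃ σ : Equiv.Perm (Fin N),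
      (Finset.univ.filter fun i => σ i = i).card = N - a ∧
      x = ∏ i, ‖ρ i (σ i)‖} := by
  apply Set.Finite.bddAbove
  apply Set.Finite.subset (Set.finite_range
    (fun σ : Equiv.Perm (Fin N) => ∏ i, ‖ρ i (σ i)‖))
  rintro x ⟨σ, -, rfl⟩
  exact ⟨σ, rfl⟩

/-- the monotone `J_a` does not increase under a pGIO image. -/
theorem pGIO_J_mono (N a : ℕ) (hN : 1 ≤ N) (ha : a ≤ N) (ha1 : a ≠ 1)
    (ρ A : Matrix (Fin N) (Fin N) ℂ)
    (hA : ∀ i j, ‖A i j‖ ≤ 1)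
    (π : Equiv.Perm (Fin N))
    (ρ' : Matrix (Fin N) (Fin N) ℂ)
    (hρ' : ∀ i j, ρ' i j = A (π i) (π j) * ρ (π i) (π j)) :
    J N a ρ' ≤ J N a ρ := by
  set S : Set ℝ := {x : ℝ | ∃ σ : Equiv.Perm (Fin N),
    (Finset.univ.filter fun i => σ i = i).card = N - a ∧
    x = ∏ i, ‖ρ i (σ i)‖} with hS
  set S' : Set ℝ := {x : ℝ | ∃ σ : Equiv.Perm (Fin N),
    (Finset.univ.filter fun i => σ i = i).card = N - a ∧
    x = ∏ i, ‖ρ' i (σ i)‖} with hS'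
  show sSup S' ≤ sSup S
  rcases Set.eq_empty_or_nonempty S' with hE | ⟨y, hy⟩
  · have hE2 : S = ∅ := by
      rw [Set.eq_empty_iff_forall_notMem] at hE ⊢
      rintro x ⟨σ, hσ, rfl⟩
      exact hE _ ⟨σ, hσ, rfl⟩
    rw [hE, hE2]
  · -- key: each element of S' is ≤ an element of S
    have key : ∀ x ∈ S', ∃ z ∈ S, x ≤ z := by
      rintro x ⟨σ', hσ', rfl⟩
      set σ : Equiv.Perm (Fin N) := π * σ' * π⁻¹ with hσdef
      have hcard : (Finset.univ.filter fun i => σ i = i).card = N - a := by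
        rw [← hσ']
        apply Finset.card_bij' (fun i _ => π.symm i) (fun i _ => π i)
        · intro i hi
          simp only [Finset.mem_filter, Finset.mem_univ, true_and] at hi ⊢
          have h1 : π (σ' (π⁻¹ i)) = i := hi
          have h2 := congrArg π.symm h1
          simpa using h2
        · intro i hi
          simp only [Finset.mem_filter, Finset.mem_univ, true_and] at hi ⊢
          show π (σ' (π⁻¹ (π i))) = π i
          simp [hi]
        · intro i _; simp
        · intro i _; simp
      refine ⟨∏ i, ‖ρ i (σ i)‖, ⟨σ, hcard, rfl⟩, ?_⟩
      calc ∏ i, ‖ρ' i (σ' i)‖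
          ≤ ∏ i, ‖ρ (π i) (π (σ' i))‖ := by
            apply Finset.prod_le_prod (fun i _ => by positivity)
            intro i _
            rw [hρ', norm_mul]
            calc ‖A (π i) (π (σ' i))‖ * ‖ρ (π i) (π (σ' i))‖
                ≤ 1 * ‖ρ (π i) (π (σ' i))‖ := by
                  apply mul_le_mul_of_nonneg_right (hA _ _) (by positivity)
              _ = _ := one_mul _
        _ = ∏ i, ‖ρ i (σ i)‖ := by
            rw [← Equiv.prod_comp π (fun j => ‖ρ j (σ j)‖)]
            apply Finset.prod_congr rfl
            intro i _
            have : σ (π i) = π (σ' i) := by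
              simp [hσdef, Equiv.Perm.mul_apply]
            rw [this]
    obtain ⟨z, hz, hyz⟩ := key y hy
    have hSne : S.Nonempty := ⟨z, hz⟩
    have hbdd := J_bddAbove N a ρ
    apply Real.sSup_le
    · intro x hx
      obtain ⟨w, hw, hxw⟩ := key x hx
      exact hxw.trans (le_csSup hbdd hw)
    · obtain ⟨σ, hσ, rfl⟩ := hz
      exact le_trans (by positivity) (le_csSup hbdd ⟨σ, hσ, rfl⟩)
end

section
/- For all N×N complex matrices V and S, the following identity holds: Σ_{α,ρ ∈ S_N} ∏_{j=1}^N V_{α(j),j} · conj(V_{ρ(j),j}) · S_{ρ(j),α(j)} = Σ_{π ∈ S_N} (∏_{i=1}^N S_{i,π(i)}) · perm(V_π ∘ conj(V)), where (V_π)_{r,j} := V_{π(r),j} is V with rows permuted by π, conj(V) is the entrywise complex conjugate, and ∘ is the entrywise (Hadamard) product. -/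
open Matrix Finset

/-- The permanent of a complex square matrix. -/
noncomputable def perm {N : ℕ} (M : Matrix (Fin N) (Fin N) ℂ) : ℂ :=
  ∑ τ : Equiv.Perm (Fin N), ∏ i, M i (τ i)

/-- The partially distinguishable boson-sampling transition probability. -/
noncomputable def P {N : ℕ} (V S : Matrix (Fin N) (Fin N) ℂ) : ℂ :=
  ∑ α : Equiv.Perm (Fin N), ∑ ρ : Equiv.Perm (Fin N),
    ∏ j, V (α j) j * (starRingEnd ℂ) (V (ρ j) j) * S (ρ j) (α j)

/-- the transition probability as a sum of permanents of
row-permuted Hadamard products. -/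
theorem transition_prob_perm_expansion (N : ℕ) (V S : Matrix (Fin N) (Fin N) ℂ) :
    P V S = ∑ π : Equiv.Perm (Fin N),
      (∏ i, S i (π i)) *
        perm (Matrix.of fun r j => V (π r) j * (starRingEnd ℂ) (V r j)) := by
  unfold P perm
  simp only [Finset.mul_sum, Matrix.of_apply]
  have key : ∀ (f : Equiv.Perm (Fin N) → Equiv.Perm (Fin N) → ℂ)
      (g : Equiv.Perm (Fin N) → Equiv.Perm (Fin N) → ℂ),
      (∀ α ρ, f α ρ = g (α * ρ⁻¹) ρ⁻¹) →
      (∑ α, ∑ ρ, f α ρ) = ∑ π, ∑ τ, g π τ := by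
    intro f g h
    calc (∑ α, ∑ ρ, f α ρ) = ∑ p : Equiv.Perm (Fin N) × Equiv.Perm (Fin N), f p.1 p.2 :=
          (Fintype.sum_prod_type (f := fun p => f p.1 p.2)).symm
      _ = ∑ p : Equiv.Perm (Fin N) × Equiv.Perm (Fin N), g p.1 p.2 := by
          refine Fintype.sum_equiv
            ⟨fun p => (p.1 * p.2⁻¹, p.2⁻¹), fun p => (p.1 * p.2⁻¹, p.2⁻¹),
              fun p => by simp [mul_assoc], fun p => by simp [mul_assoc]⟩ _ _ (fun p => h p.1 p.2)
      _ = ∑ π, ∑ τ, g π τ := Fintype.sum_prod_type (f := fun p => g p.1 p.2)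
  refine key _ _ (fun α ρ => ?_)
  simp only [Equiv.Perm.mul_apply, Equiv.Perm.coe_inv, Equiv.symm_apply_apply, Equiv.apply_symm_apply]
  rw [← Finset.prod_mul_distrib]
  rw [← Equiv.prod_comp ρ⁻¹ (fun j => V (α j) j * (starRingEnd ℂ) (V (ρ j) j) * S (ρ j) (α j))]
  simp only [Equiv.Perm.coe_inv, Equiv.apply_symm_apply]
  exact Finset.prod_congr rfl fun i _ => by ring
end

section
/- For all N×N complex matrices V and S, the following Ryser-type inclusion–exclusion identity holds: Σ_{α,ρ ∈ S_N} ∏_{j=1}^N V_{α(j),j} · conj(V_{ρ(j),j}) · S_{ρ(j),α(j)} = Σ_{R,T ⊆ {1,...,N}} (−1)^{|R|+|T|} · ∏_{j=1}^N ( Σ_{r ∈ R} Σ_{s ∈ T} V_{s,j} · conj(V_{r,j}) · S_{r,s} ), where the outer sum runs over all pairs of subsets R, T of {1,...,N} and |R| denotes the cardinality of R. -/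
open Matrix Finset

lemma superset_sum {β : Type*} [Fintype β] [DecidableEq β] (u : Finset β) :
    ∑ R : Finset β, (if u ⊆ R then ((-1:ℂ))^R.card else 0)
      = if u = Finset.univ then (-1:ℂ)^(Fintype.card β) else 0 := by
  rw [← Finset.sum_filter]
  rw [Finset.sum_bij' (i := fun R (_ : R ∈ Finset.univ.filter (u ⊆ ·)) => R \ u)
      (j := fun E (_ : E ∈ uᶜ.powerset) => u ∪ E)
      (g := fun E => (-1:ℂ)^u.card * (-1:ℂ)^E.card)]
  · rw [← Finset.mul_sum]
    have : ((∑ E ∈ uᶜ.powerset, (-1:ℤ)^E.card : ℤ) : ℂ)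
        = ∑ E ∈ uᶜ.powerset, (-1:ℂ)^E.card := by push_cast; ring_nf
    rw [← this, Finset.sum_powerset_neg_one_pow_card]
    by_cases h : u = Finset.univ
    · subst h
      simp [Finset.compl_univ, Finset.card_univ]
    · rw [if_neg (by simpa [Finset.compl_eq_empty_iff] using h), if_neg h]
      simp
  · intro R hR
    simp only [Finset.mem_filter, Finset.mem_univ, true_and] at hR
    simp only [Finset.mem_powerset]
    intro x hx
    simp only [Finset.mem_sdiff] at hx
    simp [hx.2]
  · intro E hE
    simp
  · intro R hR
    simp only [Finset.mem_filter, Finset.mem_univ, true_and] at hR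
    exact Finset.union_sdiff_of_subset hR
  · intro E hE
    simp only [Finset.mem_powerset] at hE
    apply Finset.union_sdiff_cancel_left
    intro x hxu hxE
    exact fun y hy => by
      have := hE (hxE hy)
      simp at this
      exact absurd (hxu hy) this
  · intro R hR
    simp only [Finset.mem_filter, Finset.mem_univ, true_and] at hR
    rw [← pow_add]
    congr 1
    have h2 := Finset.card_le_card hR
    rw [Finset.card_sdiff_of_subset hR]
    omega

lemma image_univ_eq_univ_iff {β : Type*} [Fintype β] [DecidableEq β] (f : β → β) :
    Finset.image f Finset.univ = Finset.univ ↔ Function.Surjective f := by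
  constructor
  · intro h y
    have hy : y ∈ Finset.image f Finset.univ := by rw [h]; exact Finset.mem_univ y
    obtain ⟨x, _, hx⟩ := Finset.mem_image.mp hy
    exact ⟨x, hx⟩
  · intro h
    apply Finset.eq_univ_of_forall
    intro y
    obtain ⟨x, hx⟩ := h y
    exact Finset.mem_image.mpr ⟨x, Finset.mem_univ x, hx⟩

/-- Ryser-type inclusion–exclusion formula for the transition probability. -/
theorem transition_prob_ryser (N : ℕ) (V S : Matrix (Fin N) (Fin N) ℂ) :
    P V S = ∑ R : Finset (Fin N), ∑ T : Finset (Fin N),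
      (-1 : ℂ) ^ (R.card + T.card) *
        ∏ j, (∑ r ∈ R, ∑ s ∈ T, V s j * (starRingEnd ℂ) (V r j) * S r s) := by
  classical
  set A : Fin N × Fin N → Fin N → ℂ :=
    fun p j => V p.2 j * (starRingEnd ℂ) (V p.1 j) * S p.1 p.2 with hA
  -- Step 1: rewrite RHS inner product as a sum over functions
  have step1 : ∀ R T : Finset (Fin N),
      (∏ j, (∑ r ∈ R, ∑ s ∈ T, V s j * (starRingEnd ℂ) (V r j) * S r s))
      = ∑ g : Fin N → Fin N × Fin N,
          if (∀ j, (g j).1 ∈ R) ∧ (∀ j, (g j).2 ∈ T) then ∏ j, A (g j) j else 0 := by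
    intro R T
    have h1 : ∀ j, (∑ r ∈ R, ∑ s ∈ T, V s j * (starRingEnd ℂ) (V r j) * S r s)
        = ∑ p ∈ R ×ˢ T, A p j := by
      intro j; rw [Finset.sum_product]
    simp_rw [h1]
    rw [Finset.prod_univ_sum]
    rw [← Finset.sum_filter]
    apply Finset.sum_congr
    · ext g
      simp [Fintype.mem_piFinset, Finset.mem_product, forall_and]
    · intros; rfl
  -- Step 2: evaluate the coefficient for each g
  have step2 : ∀ g : Fin N → Fin N × Fin N,
      (∑ R : Finset (Fin N), ∑ T : Finset (Fin N),
        (-1:ℂ) ^ (R.card + T.card) *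
          (if (∀ j, (g j).1 ∈ R) ∧ (∀ j, (g j).2 ∈ T) then ∏ j, A (g j) j else 0))
      = (if Function.Surjective (fun j => (g j).1) ∧ Function.Surjective (fun j => (g j).2)
          then ∏ j, A (g j) j else 0) := by
    intro g
    set u1 : Finset (Fin N) := Finset.image (fun j => (g j).1) Finset.univ with hu1
    set u2 : Finset (Fin N) := Finset.image (fun j => (g j).2) Finset.univ with hu2
    have keyterm : ∀ R T : Finset (Fin N),
        (-1:ℂ) ^ (R.card + T.card) *
          (if (∀ j, (g j).1 ∈ R) ∧ (∀ j, (g j).2 ∈ T) then ∏ j, A (g j) j else 0)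
        = ((if u1 ⊆ R then ((-1:ℂ))^R.card else 0) * (if u2 ⊆ T then ((-1:ℂ))^T.card else 0))
            * ∏ j, A (g j) j := by
      intro R T
      have hc1 : (∀ j, (g j).1 ∈ R) ↔ u1 ⊆ R := by
        rw [hu1, Finset.image_subset_iff]; simp
      have hc2 : (∀ j, (g j).2 ∈ T) ↔ u2 ⊆ T := by
        rw [hu2, Finset.image_subset_iff]; simp
      by_cases h1 : u1 ⊆ R <;> by_cases h2 : u2 ⊆ T <;>
        simp [h1, h2, hc1, hc2, pow_add] <;> ring
    simp_rw [keyterm]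
    simp_rw [← Finset.sum_mul]
    rw [← Finset.sum_mul_sum]
    rw [superset_sum, superset_sum, Fintype.card_fin]
    by_cases h1 : Function.Surjective fun j => (g j).1
    · by_cases h2 : Function.Surjective fun j => (g j).2
      · rw [if_pos ((image_univ_eq_univ_iff _).mpr h1),
            if_pos ((image_univ_eq_univ_iff _).mpr h2),
            if_pos ⟨h1, h2⟩, ← pow_add, Even.neg_one_pow ⟨N, rfl⟩, one_mul]
      · rw [if_neg (fun hc => h2 ((image_univ_eq_univ_iff _).mp hc)),
            if_neg (fun hc : _ ∧ _ => h2 hc.2)]; ring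
    · rw [if_neg (fun hc => h1 ((image_univ_eq_univ_iff _).mp hc)),
          if_neg (fun hc : _ ∧ _ => h1 hc.1)]; ring
  -- rearrange the RHS
  have rearr : (∑ R : Finset (Fin N), ∑ T : Finset (Fin N),
      (-1 : ℂ) ^ (R.card + T.card) *
        ∏ j, (∑ r ∈ R, ∑ s ∈ T, V s j * (starRingEnd ℂ) (V r j) * S r s))
      = ∑ g : Fin N → Fin N × Fin N,
          if Function.Surjective (fun j => (g j).1) ∧ Function.Surjective (fun j => (g j).2)
            then ∏ j, A (g j) j else 0 := by
    simp_rw [step1, Finset.mul_sum]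
    have swap : (∑ R : Finset (Fin N), ∑ T : Finset (Fin N), ∑ g : Fin N → Fin N × Fin N,
        (-1:ℂ) ^ (R.card + T.card) *
          (if (∀ j, (g j).1 ∈ R) ∧ (∀ j, (g j).2 ∈ T) then ∏ j, A (g j) j else 0))
        = ∑ g : Fin N → Fin N × Fin N, ∑ R : Finset (Fin N), ∑ T : Finset (Fin N),
        (-1:ℂ) ^ (R.card + T.card) *
          (if (∀ j, (g j).1 ∈ R) ∧ (∀ j, (g j).2 ∈ T) then ∏ j, A (g j) j else 0) := by
      exact (Finset.sum_congr rfl fun R _ => Finset.sum_comm).trans Finset.sum_comm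
    rw [swap]
    exact Finset.sum_congr rfl fun g _ => step2 g
  rw [rearr, ← Finset.sum_filter]
  -- Step 3: the surviving terms are indexed by pairs of permutations
  unfold P
  rw [← Fintype.sum_prod_type']
  apply Finset.sum_bij (i := fun (x : Equiv.Perm (Fin N) × Equiv.Perm (Fin N)) _ =>
    (fun j => ((x.2 j : Fin N), (x.1 j : Fin N))))
  · intro x _
    simp only [Finset.mem_filter, Finset.mem_univ, true_and]
    exact ⟨x.2.surjective, x.1.surjective⟩
  · intro x _ y _ h
    have h1 : ∀ j, x.1 j = y.1 j := fun j => congrArg Prod.snd (congrFun h j)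
    have h2 : ∀ j, x.2 j = y.2 j := fun j => congrArg Prod.fst (congrFun h j)
    exact Prod.ext (Equiv.ext h1) (Equiv.ext h2)
  · intro g hg
    simp only [Finset.mem_filter, Finset.mem_univ, true_and] at hg
    obtain ⟨hs1, hs2⟩ := hg
    have hb1 := Finite.surjective_iff_bijective.mp hs1
    have hb2 := Finite.surjective_iff_bijective.mp hs2
    refine ⟨(Equiv.ofBijective _ hb2, Equiv.ofBijective _ hb1), Finset.mem_univ _, ?_⟩
    funext j
    simp [Equiv.ofBijective_apply]
  · intro x _
    rfl
end

section
/- Let V be an N×N complex matrix and let S be an N×N complex positive semidefinite matrix. Then the quantity P(V,S) := Σ_{α,ρ ∈ S_N} ∏_{j=1}^N V_{α(j),j} · conj(V_{ρ(j),j}) · S_{ρ(j),α(j)} is a nonnegative real number. -/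
open Matrix Finset
open scoped ComplexOrder

/-- for positive semidefinite `S`, the transition probability is a
nonnegative real number (i.e. nonnegative in the complex order, which forces it
to be real with nonnegative real part). -/
theorem transition_prob_nonneg (N : ℕ) (V S : Matrix (Fin N) (Fin N) ℂ)
    (hS : S.PosSemidef) :
    0 ≤ P V S := by
  obtain ⟨B, hB⟩ : ∃ B : Matrix (Fin N) (Fin N) ℂ, S = Bᴴ * B := by
    open scoped MatrixOrder in exact CStarAlgebra.nonneg_iff_eq_star_mul_self.mp hS.nonneg
  set Q : (Fin N → Fin N) → ℂ := fun f =>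
    ∑ σ : Equiv.Perm (Fin N), ∏ j, V (σ j) j * B (f j) (σ j) with hQ
  have key : P V S = ∑ f : Fin N → Fin N, star (Q f) * Q f := by
    have step : ∀ α ρ : Equiv.Perm (Fin N),
        (∏ j, V (α j) j * (starRingEnd ℂ) (V (ρ j) j) * S (ρ j) (α j))
        = ∑ f : Fin N → Fin N,
            star (∏ j, V (ρ j) j * B (f j) (ρ j)) * ∏ j, V (α j) j * B (f j) (α j) := by
      intro α ρ
      have h1 : ∀ j : Fin N,
          V (α j) j * (starRingEnd ℂ) (V (ρ j) j) * S (ρ j) (α j)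
          = ∑ k : Fin N, star (V (ρ j) j * B k (ρ j)) * (V (α j) j * B k (α j)) := by
        intro j
        rw [hB, Matrix.mul_apply, Finset.mul_sum]
        refine Finset.sum_congr rfl fun k _ => ?_
        simp only [Matrix.conjTranspose_apply, star_mul', Complex.star_def]
        ring
      calc (∏ j, V (α j) j * (starRingEnd ℂ) (V (ρ j) j) * S (ρ j) (α j))
          = ∏ j, ∑ k : Fin N, star (V (ρ j) j * B k (ρ j)) * (V (α j) j * B k (α j)) := by
            exact Finset.prod_congr rfl fun j _ => h1 j
        _ = ∑ f ∈ Fintype.piFinset (fun _ : Fin N => (Finset.univ : Finset (Fin N))),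
              ∏ j, star (V (ρ j) j * B (f j) (ρ j)) * (V (α j) j * B (f j) (α j)) :=
            Finset.prod_univ_sum _ _
        _ = ∑ f : Fin N → Fin N,
              star (∏ j, V (ρ j) j * B (f j) (ρ j)) * ∏ j, V (α j) j * B (f j) (α j) := by
            rw [Fintype.piFinset_univ]
            refine Finset.sum_congr rfl fun f _ => ?_
            rw [Finset.prod_mul_distrib, star_prod]
    rw [P]
    calc (∑ α : Equiv.Perm (Fin N), ∑ ρ : Equiv.Perm (Fin N),
            ∏ j, V (α j) j * (starRingEnd ℂ) (V (ρ j) j) * S (ρ j) (α j))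
        = ∑ α : Equiv.Perm (Fin N), ∑ ρ : Equiv.Perm (Fin N), ∑ f : Fin N → Fin N,
            star (∏ j, V (ρ j) j * B (f j) (ρ j)) * ∏ j, V (α j) j * B (f j) (α j) := by
          exact Finset.sum_congr rfl fun α _ => Finset.sum_congr rfl fun ρ _ => step α ρ
      _ = ∑ f : Fin N → Fin N, ∑ α : Equiv.Perm (Fin N), ∑ ρ : Equiv.Perm (Fin N),
            star (∏ j, V (ρ j) j * B (f j) (ρ j)) * ∏ j, V (α j) j * B (f j) (α j) := by
          calc (∑ α : Equiv.Perm (Fin N), ∑ ρ : Equiv.Perm (Fin N), ∑ f : Fin N → Fin N,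
            star (∏ j, V (ρ j) j * B (f j) (ρ j)) * ∏ j, V (α j) j * B (f j) (α j))
              = ∑ α : Equiv.Perm (Fin N), ∑ f : Fin N → Fin N, ∑ ρ : Equiv.Perm (Fin N),
            star (∏ j, V (ρ j) j * B (f j) (ρ j)) * ∏ j, V (α j) j * B (f j) (α j) :=
                Finset.sum_congr rfl fun α _ => Finset.sum_comm
            _ = _ := Finset.sum_comm
      _ = ∑ f : Fin N → Fin N, star (Q f) * Q f := by
          refine Finset.sum_congr rfl fun f _ => ?_
          rw [hQ]
          simp only [star_sum, Finset.sum_mul, Finset.mul_sum]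
  rw [key]
  exact Finset.sum_nonneg fun f _ => star_mul_self_nonneg (Q f)
end

section
/- Let V be an N×N complex matrix and π a permutation of {1,...,N}, and let V_π be the row-permuted matrix (V_π)_{r,j} := V_{π(r),j}. Then |perm(V_π ∘ conj(V))| ≤ perm(V ∘ conj(V)), where conj(V) is the entrywise complex conjugate and ∘ is the entrywise (Hadamard) product, so that the right-hand side is the permanent of the nonnegative matrix with entries |V_{ij}|². -/
open Matrix Finset

/-- The permanent of a real square matrix. -/
def permR {N : ℕ} (M : Matrix (Fin N) (Fin N) ℝ) : ℝ :=
  ∑ τ : Equiv.Perm (Fin N), ∏ i, M i (τ i)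

/-- `|perm(V_π ∘ conj V)| ≤ perm(V ∘ conj V)`, where `V_π` is the
row-permuted matrix and the right-hand side is the permanent of the nonnegative
matrix with entries `|V i j|²`. -/
theorem abs_perm_row_permuted_le (N : ℕ) (V : Matrix (Fin N) (Fin N) ℂ)
    (π : Equiv.Perm (Fin N)) :
    ‖perm (Matrix.of fun r j => V (π r) j * (starRingEnd ℂ) (V r j))‖ ≤
      permR (Matrix.of fun i j => ‖V i j‖ ^ 2) := by
  set P := permR (Matrix.of fun i j => ‖V i j‖ ^ 2) with hP
  set x : Equiv.Perm (Fin N) → ℝ := fun τ => ∏ r, ‖V (π r) (τ r)‖ with hx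
  set y : Equiv.Perm (Fin N) → ℝ := fun τ => ∏ r, ‖V r (τ r)‖ with hy
  have hxnn : ∀ τ, 0 ≤ x τ := fun τ => Finset.prod_nonneg fun r _ => norm_nonneg _
  have hynn : ∀ τ, 0 ≤ y τ := fun τ => Finset.prod_nonneg fun r _ => norm_nonneg _
  have h1 : ‖perm (Matrix.of fun r j => V (π r) j * (starRingEnd ℂ) (V r j))‖ ≤
      ∑ τ : Equiv.Perm (Fin N), x τ * y τ := by
    refine (norm_sum_le _ _).trans_eq ?_
    refine Finset.sum_congr rfl fun τ _ => ?_
    rw [norm_prod, hx, hy, ← Finset.prod_mul_distrib]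
    refine Finset.prod_congr rfl fun r _ => ?_
    simp [_root_.map_mul, Complex.norm_conj]
  have hy2 : ∑ τ : Equiv.Perm (Fin N), (y τ) ^ 2 = P := by
    rw [hP, permR]
    refine Finset.sum_congr rfl fun τ _ => ?_
    rw [hy]
    simp [Finset.prod_pow]
  have hx2 : ∑ τ : Equiv.Perm (Fin N), (x τ) ^ 2 = P := by
    rw [hP, permR]
    refine (Fintype.sum_equiv (Equiv.mulRight π) _ _ ?_).symm
    intro σ
    have := Equiv.prod_comp π (fun i => ‖V i (σ i)‖ ^ 2)
    simp only [Matrix.of_apply]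
    rw [← this, hx]
    simp [Finset.prod_pow, Equiv.Perm.mul_apply]
  have hPnn : 0 ≤ P := by
    rw [← hy2]
    exact Finset.sum_nonneg fun τ _ => sq_nonneg _
  have hcs := Finset.sum_mul_sq_le_sq_mul_sq Finset.univ x y
  rw [hx2, hy2] at hcs
  have hsnn : 0 ≤ ∑ τ : Equiv.Perm (Fin N), x τ * y τ :=
    Finset.sum_nonneg fun τ _ => mul_nonneg (hxnn τ) (hynn τ)
  nlinarith [h1, hcs, hsnn, hPnn]
end

section
/- Let V be an N×N complex matrix and let S be an N×N complex positive semidefinite matrix with S_{ii} = 1 for all i. Then P(V,S) ≤ Σ_{π ∈ S_N} |perm(V_π ∘ conj(V))| · ∏_{i=1}^N |S_{i,π(i)}|, where (V_π)_{r,j} := V_{π(r),j} and ∘ is the entrywise (Hadamard) product; equivalently, P(V,S) ≤ perm(V ∘ conj(V)) + Σ_{π ≠ id} |perm(V_π ∘ conj(V))| · J_π(S) with J_π(S) := ∏_{i=1}^N |S_{i,π(i)}|. -/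
open Matrix Finset
open scoped ComplexOrder

lemma hermitian_entry {N : ℕ} {S : Matrix (Fin N) (Fin N) ℂ} (hS : S.IsHermitian)
    (i j : Fin N) : (starRingEnd ℂ) (S i j) = S j i := by
  rw [starRingEnd_apply]; exact hS.apply j i

lemma key_formula {N : ℕ} (V S : Matrix (Fin N) (Fin N) ℂ) :
    P V S = ∑ π : Equiv.Perm (Fin N),
      (starRingEnd ℂ) (perm (Matrix.of fun r j => V (π r) j * (starRingEnd ℂ) (V r j))) *
        ∏ i, S (π i) i := by
  unfold P perm
  have h1 : ∀ α : Equiv.Perm (Fin N),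
      (∑ ρ : Equiv.Perm (Fin N), ∏ j, V (α j) j * (starRingEnd ℂ) (V (ρ j) j) * S (ρ j) (α j))
      = ∑ π : Equiv.Perm (Fin N),
          ∏ j, V (α j) j * (starRingEnd ℂ) (V (π (α j)) j) * S (π (α j)) (α j) := by
    intro α
    exact (Fintype.sum_equiv (Equiv.mulRight α) _ _
      (fun π => by simp [Equiv.Perm.mul_apply])).symm
  simp_rw [h1]
  rw [Finset.sum_comm]
  refine Finset.sum_congr rfl fun π _ => ?_
  have h2 : ∀ α : Equiv.Perm (Fin N),
      (∏ j, V (α j) j * (starRingEnd ℂ) (V (π (α j)) j) * S (π (α j)) (α j))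
      = (∏ j, V (α j) j * (starRingEnd ℂ) (V (π (α j)) j)) * ∏ i, S (π i) i := by
    intro α
    rw [Finset.prod_mul_distrib]
    congr 1
    exact Equiv.prod_comp α (fun i => S (π i) i)
  simp_rw [h2, ← Finset.sum_mul]
  congr 1
  rw [map_sum]
  refine Fintype.sum_bijective (fun τ : Equiv.Perm (Fin N) => τ⁻¹)
    (Equiv.inv (Equiv.Perm (Fin N))).bijective _ _ (fun τ => ?_)
  calc (∏ j, V (τ j) j * (starRingEnd ℂ) (V (π (τ j)) j))
      = ∏ j, (fun x => V x (τ⁻¹ x) * (starRingEnd ℂ) (V (π x) (τ⁻¹ x))) (τ j) :=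
        Finset.prod_congr rfl fun j _ => by simp
    _ = ∏ x, V x (τ⁻¹ x) * (starRingEnd ℂ) (V (π x) (τ⁻¹ x)) :=
        Equiv.prod_comp τ (fun x => V x (τ⁻¹ x) * (starRingEnd ℂ) (V (π x) (τ⁻¹ x)))
    _ = _ := by
        rw [map_prod]
        exact Finset.prod_congr rfl fun i _ => by simp [mul_comm]

lemma P_self_conj {N : ℕ} (V S : Matrix (Fin N) (Fin N) ℂ) (hS : S.IsHermitian) :
    (starRingEnd ℂ) (P V S) = P V S := by
  unfold P
  rw [map_sum]
  simp_rw [map_sum, map_prod, _root_.map_mul, Complex.conj_conj]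
  rw [Finset.sum_comm]
  refine Finset.sum_congr rfl fun α _ => Finset.sum_congr rfl fun ρ _ =>
    Finset.prod_congr rfl fun j _ => ?_
  rw [hermitian_entry hS]
  ring

/-- upper bound on the transition probability by the sum over
permutations of `|perm(V_π ∘ conj V)| · ∏_i |S i (π i)|`. -/
theorem transition_prob_le_interference_bound (N : ℕ)
    (V S : Matrix (Fin N) (Fin N) ℂ)
    (hS : S.PosSemidef) (hS1 : ∀ i, S i i = 1) :
    P V S ≤ ((∑ π : Equiv.Perm (Fin N),
      ‖perm (Matrix.of fun r j => V (π r) j * (starRingEnd ℂ) (V r j))‖ *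
        ∏ i, ‖S i (π i)‖ : ℝ) : ℂ) := by
  have hre : P V S = ((P V S).re : ℂ) :=
    (Complex.conj_eq_iff_re.mp (P_self_conj V S hS.isHermitian)).symm
  rw [hre, Complex.real_le_real]
  calc (P V S).re ≤ ‖P V S‖ := Complex.re_le_norm _
    _ ≤ _ := by
        rw [key_formula]
        refine le_trans (norm_sum_le _ _) (le_of_eq ?_)
        refine Finset.sum_congr rfl fun π _ => ?_
        rw [norm_mul, Complex.norm_conj, norm_prod]
        congr 1
        refine Finset.prod_congr rfl fun i _ => ?_
        rw [← hermitian_entry hS.isHermitian (π i) i, Complex.norm_conj]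
end
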